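/- Let p ≥ 7 be a prime. The solutions in F_p^p of the system x₁^k + x₂^k + ... + x_p^k = 0 for 1 ≤ k ≤ (p−1)/2 are exactly the p-tuples all of whose components are equal, together with the p-tuples whose components form a permutation of all elements of F_p. -/

import Mathlib

open Polynomial Finset in
private lemma redei_esymm_zero (p : ℕ) [Fact p.Prime] (x : Fin p → ZMod p)
    (hS : ∀ k : ℕ, 1 ≤ k → k ≤ (p - 1) / 2 → ∑ i, x i ^ k = 0)
    (k : ℕ) (hk1 : 1 ≤ k) (hk2 : k ≤ (p - 1) / 2) :
    (Finset.univ.val.map x).esymm k = 0 := by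
  have h1 := congrArg (MvPolynomial.aeval x) (MvPolynomial.mul_esymm_eq_sum (Fin p) (ZMod p) k)
  have hps : ∀ n : ℕ, MvPolynomial.aeval x (MvPolynomial.psum (Fin p) (ZMod p) n)
      = ∑ i, x i ^ n := by
    intro n
    simp [MvPolynomial.psum]
  rw [map_mul, map_mul] at h1
  simp only [map_natCast, map_sum, map_mul, map_pow, map_neg, map_one,
    MvPolynomial.aeval_esymm_eq_multiset_esymm, hps] at h1
  have hz : ∀ a ∈ (antidiagonal k).filter (fun a => a.1 < k),
      (-1 : ZMod p) ^ a.1 * (Finset.univ.val.map x).esymm a.1 * (∑ i, x i ^ a.2) = 0 := by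
    intro a ha
    simp only [mem_filter, Finset.HasAntidiagonal.mem_antidiagonal] at ha
    rw [hS a.2 (by omega) (by omega), mul_zero]
  rw [Finset.sum_eq_zero hz, mul_zero] at h1
  have hk0 : (k : ZMod p) ≠ 0 := by
    have hlt : k < p := by
      have := (Fact.out : p.Prime).two_le; omega
    simpa [ZMod.natCast_eq_zero_iff] using
      fun hdvd => Nat.not_lt.2 (Nat.le_of_dvd (by omega) hdvd) hlt
  exact (mul_eq_zero.mp h1).resolve_left hk0

open Polynomial Finset in
private lemma redei_forward (p : ℕ) [Fact p.Prime] (hp : 7 ≤ p) (x : Fin p → ZMod p)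
    (hE : ∀ k : ℕ, 1 ≤ k → k ≤ (p - 1) / 2 → (Finset.univ.val.map x).esymm k = 0) :
    ((∃ c : ZMod p, ∀ i, x i = c) ∨ Function.Bijective x) := by
  classical
  have hpp : p.Prime := Fact.out
  have hodd : p % 2 = 1 := Nat.odd_iff.mp (hpp.odd_of_ne_two (by omega))
  set m := (p - 1) / 2 with hm
  have hmm : m + m = p - 1 := by omega
  set s : Multiset (ZMod p) := Finset.univ.val.map x with hs
  have hcard : Multiset.card s = p := by simp [hs]
  set f : (ZMod p)[X] := (s.map fun t => X - C t).prod with hf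
  have hfm : f.Monic := monic_multiset_prod_of_monic _ _ (fun t _ => monic_X_sub_C t)
  have hdegf : f.natDegree = p := by
    rw [hf, natDegree_multiset_prod_X_sub_C_eq_card, hcard]
  have hcoef : ∀ n, m < n → n < p → f.coeff n = 0 := by
    intro n h1 h2
    rw [hf, Multiset.prod_X_sub_C_coeff s (by omega), hcard,
      hE (p - n) (by omega) (by omega), mul_zero]
  set h : (ZMod p)[X] := f - (X ^ p - X) with hh
  have hfeq : f = X ^ p - X + h := by rw [hh]; ring
  have hdegh : h.natDegree ≤ m := by
    rw [natDegree_le_iff_coeff_eq_zero]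
    intro n hn
    rw [hh, coeff_sub, coeff_sub, coeff_X_pow, coeff_X]
    by_cases h1 : n = p
    · subst h1
      have hc1 : f.coeff n = 1 := by
        have := hfm.coeff_natDegree; rwa [hdegf] at this
      rw [if_pos rfl, if_neg (by omega), hc1]; ring
    · have hc0 : f.coeff n = 0 := by
        rcases lt_or_gt_of_ne h1 with h2 | h2
        · exact hcoef n hn h2
        · exact coeff_eq_zero_of_natDegree_lt (by omega)
      rw [if_neg h1, if_neg (by omega), hc0]; ring
  by_cases h0 : h = 0
  · -- bijective case
    right
    have hfx : f = X ^ p - X := by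
      have := hfeq; rw [h0, add_zero] at this; exact this
    have hroots : f.roots = s := by rw [hf]; exact roots_multiset_prod_X_sub_C s
    have hroots2 : f.roots = (Finset.univ : Finset (ZMod p)).val := by
      rw [hfx]
      have := FiniteField.roots_X_pow_card_sub_X (ZMod p)
      rwa [ZMod.card] at this
    have hsu : s = (Finset.univ : Finset (ZMod p)).val := by
      rw [← hroots, hroots2]
    have hinj : Function.Injective x := by
      have hnd : s.Nodup := by rw [hsu]; exact (Finset.univ : Finset (ZMod p)).nodup
      rw [hs] at hnd
      intro a b hab
      exact (Multiset.nodup_map_iff_inj_on (Finset.univ : Finset (Fin p)).nodup).mp hnd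
        a (Finset.mem_univ a) b (Finset.mem_univ b) hab
    exact (Fintype.bijective_iff_injective_and_card x).mpr ⟨hinj, by simp [ZMod.card]⟩
  · -- h ≠ 0
    set A : Finset (ZMod p) := s.toFinset with hA
    have hrf : (∏ a ∈ A, (X - C a)) ∣ f := by
      rw [hf, Finset.prod_eq_multiset_prod]
      exact Multiset.prod_dvd_prod_of_le (Multiset.map_le_map (by
        rw [hA]; exact s.dedup_le))
    have hrX : (∏ a ∈ A, (X - C a)) ∣ (X ^ p - X : (ZMod p)[X]) := by
      apply Finset.prod_dvd_of_coprime
      · intro a _ b _ hab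
        exact isCoprime_X_sub_C_of_isUnit_sub (IsUnit.mk0 _ (sub_ne_zero.mpr (by
          exact fun e => hab (by exact e))))
      · intro a _
        rw [dvd_iff_isRoot]
        simp [IsRoot, ZMod.pow_card]
    have hrh : (∏ a ∈ A, (X - C a)) ∣ h := by
      rw [hh]; exact dvd_sub hrf hrX
    have hcardA : A.card ≤ m := by
      have h2 := Polynomial.natDegree_le_of_dvd hrh h0
      rw [Polynomial.natDegree_prod _ _ (fun a _ => X_sub_C_ne_zero a),
        Finset.sum_congr rfl (fun a _ => natDegree_X_sub_C a), Finset.sum_const,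
        smul_eq_mul, mul_one] at h2
      exact h2.trans hdegh
    have hsumcount : ∑ a ∈ A, s.count a = p := by
      rw [hA, Multiset.toFinset_sum_count_eq, hcard]
    have hcount1 : ∀ a ∈ A, 1 ≤ s.count a := by
      intro a ha
      rw [hA, Multiset.mem_toFinset] at ha
      exact Multiset.one_le_count_iff_mem.mpr ha
    set D : (ZMod p)[X] := ∏ a ∈ A, (X - C a) ^ (s.count a - 1) with hD
    have hDdvd : D ∣ derivative f := by
      apply Finset.prod_dvd_of_coprime
      · intro a _ b hb hab
        exact (isCoprime_X_sub_C_of_isUnit_sub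
          (IsUnit.mk0 _ (sub_ne_zero.mpr (fun e => hab e)))).pow
      · intro a _
        apply pow_sub_one_dvd_derivative_of_pow_dvd (n := s.count a)
        rw [hf]
        have hle : Multiset.replicate (s.count a) a ≤ s :=
          Multiset.le_count_iff_replicate_le.mp le_rfl
        have hdvd := Multiset.prod_dvd_prod_of_le
          (Multiset.map_le_map (f := fun t => X - C t) hle)
        rwa [Multiset.map_replicate, Multiset.prod_replicate] at hdvd
    have hdf : derivative f = derivative h - 1 := by
      rw [hfeq, derivative_add, derivative_sub, derivative_X_pow, derivative_X]
      simp only [CharP.cast_eq_zero, map_zero, zero_mul]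
      ring
    by_cases hD0 : derivative f = 0
    · left
      have hderh : derivative h = 1 := by
        have h2 := hdf; rw [hD0] at h2
        exact sub_eq_zero.mp h2.symm
      set q : (ZMod p)[X] := h - X with hq
      have hq' : derivative q = 0 := by
        rw [hq, derivative_sub, derivative_X, hderh, sub_self]
      have hdegq : q.natDegree ≤ m := by
        rw [hq]
        exact (natDegree_sub_le _ _).trans (max_le hdegh (by rw [natDegree_X]; omega))
      have hqc : ∀ n, 1 ≤ n → q.coeff n = 0 := by
        intro n hn
        by_cases h2 : n ≤ m
        · have h3 := congrArg (fun r => Polynomial.coeff r (n - 1)) hq'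
          simp only [coeff_derivative, coeff_zero] at h3
          have hne : ((n - 1 : ℕ) : ZMod p) + 1 ≠ 0 := by
            have h5 : (((n - 1 : ℕ) + 1 : ℕ) : ZMod p) ≠ 0 := by
              rw [Ne, ZMod.natCast_eq_zero_iff]
              intro hdvd
              have := Nat.le_of_dvd (by omega) hdvd
              omega
            simpa using h5
          rcases mul_eq_zero.mp h3 with h4 | h4
          · rwa [(by omega : n - 1 + 1 = n)] at h4
          · exact absurd h4 hne
        · exact coeff_eq_zero_of_natDegree_lt (by omega)
      have hqC : q = C (q.coeff 0) := by
        ext n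
        cases n with
        | zero => simp
        | succ k =>
          rw [coeff_C, if_neg (by omega)]
          exact hqc _ (by omega)
      obtain ⟨c0, hc0⟩ : ∃ c0, q = C c0 := ⟨q.coeff 0, hqC⟩
      refine ⟨-c0, fun i => ?_⟩
      have hxi : x i ∈ s := by
        rw [hs]; exact Multiset.mem_map.mpr ⟨i, by simp, rfl⟩
      have hroot : f.eval (x i) = 0 := by
        rw [hf, eval_multiset_prod]
        apply Multiset.prod_eq_zero
        rw [Multiset.map_map]
        exact Multiset.mem_map.mpr ⟨x i, hxi, by simp⟩
      have hfval : f = X ^ p + C c0 := by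
        have hhq : h = C c0 + X := by rw [← hc0, hq]; ring
        rw [hfeq, hhq]
        ring
      rw [hfval] at hroot
      simp only [eval_add, eval_pow, eval_X, eval_C, ZMod.pow_card] at hroot
      exact eq_neg_of_add_eq_zero_left hroot
    · exfalso
      have hdegD : D.natDegree = p - A.card := by
        rw [hD, natDegree_prod _ _ (fun a _ => pow_ne_zero _ (X_sub_C_ne_zero a))]
        have : ∀ a ∈ A, ((X - C a) ^ (s.count a - 1)).natDegree = s.count a - 1 := by
          intro a _
          rw [natDegree_pow, natDegree_X_sub_C, mul_one]
        have hsub : ∑ a ∈ A, (s.count a - 1) = (∑ a ∈ A, s.count a) - ∑ _a ∈ A, 1 :=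
          Finset.sum_tsub_distrib A hcount1
        rw [Finset.sum_congr rfl this, hsub, hsumcount, Finset.sum_const, smul_eq_mul, mul_one]
      have hle1 : D.natDegree ≤ (derivative f).natDegree :=
        natDegree_le_of_dvd hDdvd hD0
      have hle2 : (derivative f).natDegree ≤ m := by
        rw [hdf]
        refine (natDegree_sub_le _ _).trans ?_
        simp only [natDegree_one]
        exact max_le ((natDegree_derivative_le h).trans (by omega)) (by omega)
      omega

/-- Rédei's theorem: for p ≥ 7 prime, the solutions in F_p^p of the system
x₁^k + ⋯ + x_p^k = 0 for 1 ≤ k ≤ (p−1)/2 are exactly the constant p-tuples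
together with the p-tuples whose components are a permutation of all of F_p. -/
theorem stmt12 (p : ℕ) [Fact p.Prime] (hp : 7 ≤ p) (x : Fin p → ZMod p) :
    (∀ k : ℕ, 1 ≤ k → k ≤ (p - 1) / 2 → ∑ i, x i ^ k = 0) ↔
      ((∃ c : ZMod p, ∀ i, x i = c) ∨ Function.Bijective x) := by
  constructor
  · intro hS
    exact redei_forward p hp x (fun k hk1 hk2 => redei_esymm_zero p x hS k hk1 hk2)
  · rintro (⟨c, hc⟩ | hb) k hk1 hk2
    · simp only [hc]
      simp [Finset.sum_const, ZMod.natCast_self]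
    · have h1 : ∑ i, x i ^ k = ∑ a : ZMod p, a ^ k :=
        Fintype.sum_bijective x hb _ _ (fun i => rfl)
      rw [h1]
      have h2 : k < Fintype.card (ZMod p) - 1 := by
        rw [ZMod.card]; omega
      exact FiniteField.sum_pow_lt_card_sub_one (ZMod p) k h2
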